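/- For every real number r in (1,∞) there exists a constant c_r > 0 such that for all vectors a, b in ℝ^N, the inequality ⟨‖a‖^{r-2} a − ‖b‖^{r-2} b, a − b⟩ ≥ c_r (‖a‖ + ‖b‖)^{r-2} ‖a − b‖² ≥ 0 holds. -/

import Mathlib

private lemma rpow_shift (r : ℝ) (hr : 1 < r) {x : ℝ} (hx : 0 ≤ x) :
    x ^ (r - 2) * x = x ^ (r - 1) := by
  rcases hx.eq_or_lt with h | h
  · rw [← h, mul_zero, Real.zero_rpow (by linarith)]
  · nth_rewrite 2 [← Real.rpow_one x]
    rw [← Real.rpow_add h]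
    ring_nf

private lemma lemA (r : ℝ) (hr : 1 < r) {α β : ℝ} (hβ : 0 ≤ β) (hβα : β ≤ α) :
    (2:ℝ) ^ (1 - r) * (α + β) ^ (r - 1) ≤ α ^ (r - 1) + β ^ (r - 1) := by
  have hα : 0 ≤ α := hβ.trans hβα
  have h1 : ((α + β) / 2) ^ (r - 1) ≤ α ^ (r - 1) :=
    Real.rpow_le_rpow (by linarith) (by linarith) (by linarith)
  have h2 : ((α + β) / 2) ^ (r - 1) = (α + β) ^ (r - 1) / 2 ^ (r - 1) :=
    Real.div_rpow (by linarith) (by norm_num) _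
  have h3 : (2:ℝ) ^ (1 - r) = ((2:ℝ) ^ (r - 1))⁻¹ := by
    rw [← Real.rpow_neg (by norm_num)]; ring_nf
  have h4 : (0:ℝ) ≤ β ^ (r - 1) := Real.rpow_nonneg hβ _
  rw [h3]
  rw [h2, div_eq_inv_mul] at h1
  linarith

private lemma lemB (r : ℝ) (hr : 1 < r) {α β : ℝ} (hβ : 0 ≤ β) (hβα : β ≤ α) :
    α ^ (r - 1) - β ^ (r - 1) ≥ ((r - 1) / 2 ^ (r - 1)) * ((α + β) ^ (r - 2) * (α - β)) := by
  have hα : 0 ≤ α := hβ.trans hβα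
  have h2pos : (0:ℝ) < (2:ℝ) ^ (r - 1) := Real.rpow_pos_of_pos (by norm_num) _
  have h2one : (1:ℝ) ≤ (2:ℝ) ^ (r - 1) := Real.one_le_rpow (by norm_num) (by linarith)
  rcases hα.eq_or_lt with h0 | h0
  · have hβ0 : β = 0 := le_antisymm (h0 ▸ hβα) hβ
    rw [← h0, hβ0]
    simp [Real.zero_rpow (by linarith : r - 1 ≠ 0)]
  rcases le_or_gt r 2 with h2 | h2
  · -- 1 < r ≤ 2 : concavity / Bernoulli upper bound
    have hs : (-1:ℝ) ≤ β / α - 1 := by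
      have : 0 ≤ β / α := div_nonneg hβ h0.le
      linarith
    have hb := rpow_one_add_le_one_add_mul_self hs
      (by linarith : (0:ℝ) ≤ r - 1) (by linarith : r - 1 ≤ 1)
    have e0 : 1 + (β / α - 1) = β / α := by ring
    rw [e0] at hb
    have h1 : (β / α) ^ (r - 1) = β ^ (r - 1) / α ^ (r - 1) :=
      Real.div_rpow hβ hα _
    have hαp : 0 < α ^ (r - 1) := Real.rpow_pos_of_pos h0 _
    have hsh := rpow_shift r hr hα
    have e1 : α ^ (r - 1) * (β / α) = α ^ (r - 2) * β := by
      rw [← hsh]; field_simp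
    have hb2 : β ^ (r - 1) ≤ α ^ (r - 1) + (r - 1) * (α ^ (r - 2) * β - α ^ (r - 1)) := by
      have hm := mul_le_mul_of_nonneg_left hb hαp.le
      have l : α ^ (r - 1) * (β / α) ^ (r - 1) = β ^ (r - 1) := by
        rw [h1]; field_simp
      have rr : α ^ (r - 1) * (1 + (r - 1) * (β / α - 1))
          = α ^ (r - 1) + (r - 1) * (α ^ (r - 2) * β - α ^ (r - 1)) := by
        linear_combination (r - 1) * e1
      linarith [hm, l, rr]
    have hmono : (α + β) ^ (r - 2) ≤ α ^ (r - 2) :=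
      Real.rpow_le_rpow_of_nonpos h0 (by linarith) (by linarith)
    have hPn : (0:ℝ) ≤ (α + β) ^ (r - 2) * (α - β) :=
      mul_nonneg (Real.rpow_nonneg (by linarith) _) (by linarith)
    have hcoef : (r - 1) / 2 ^ (r - 1) ≤ r - 1 := div_le_self (by linarith) h2one
    have hstep : α ^ (r - 1) - β ^ (r - 1) ≥ (r - 1) * (α ^ (r - 2) * (α - β)) := by
      have e4 : (r - 1) * (α ^ (r - 2) * (α - β)) = (r - 1) * (α ^ (r - 1) - α ^ (r - 2) * β) := by
        rw [← hsh]; ring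
      linarith [hb2, e4]
    have hstep2 : (r - 1) * ((α + β) ^ (r - 2) * (α - β)) ≤ (r - 1) * (α ^ (r - 2) * (α - β)) :=
      mul_le_mul_of_nonneg_left (mul_le_mul_of_nonneg_right hmono (by linarith)) (by linarith)
    have hstep3 := mul_le_mul_of_nonneg_right hcoef hPn
    nlinarith [hstep, hstep2, hstep3]
  · -- 2 < r : convexity / Bernoulli lower bound
    set m : ℝ := (α + β) / 2 with hm
    have hmpos : 0 < m := by positivity
    have hb := one_add_mul_self_le_rpow_one_add (by
        have : 0 ≤ α / m := div_nonneg hα hmpos.le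
        linarith : (-1:ℝ) ≤ α / m - 1)
      (by linarith : (1:ℝ) ≤ r - 1)
    have e0 : 1 + (α / m - 1) = α / m := by ring
    rw [e0] at hb
    have h1 : (α / m) ^ (r - 1) = α ^ (r - 1) / m ^ (r - 1) :=
      Real.div_rpow hα hmpos.le _
    have hmp : 0 < m ^ (r - 1) := Real.rpow_pos_of_pos hmpos _
    have hshm := rpow_shift r hr hmpos.le
    have e1 : m ^ (r - 1) * (α / m) = m ^ (r - 2) * α := by
      rw [← hshm]; field_simp
    have hb2 : m ^ (r - 1) + (r - 1) * (m ^ (r - 2) * α - m ^ (r - 1)) ≤ α ^ (r - 1) := by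
      have hmm := mul_le_mul_of_nonneg_left hb hmp.le
      have l : m ^ (r - 1) * (α ^ (r - 1) / m ^ (r - 1)) = α ^ (r - 1) := by
        field_simp
      have rr : m ^ (r - 1) * (1 + (r - 1) * (α / m - 1))
          = m ^ (r - 1) + (r - 1) * (m ^ (r - 2) * α - m ^ (r - 1)) := by
        linear_combination (r - 1) * e1
      rw [h1] at hmm
      linarith [hmm, l, rr]
    have hβm : β ^ (r - 1) ≤ m ^ (r - 1) :=
      Real.rpow_le_rpow hβ (by rw [hm]; linarith) (by linarith)
    have hkey2 : α ^ (r - 1) - β ^ (r - 1) ≥ (r - 1) * (m ^ (r - 2) * α - m ^ (r - 1)) := by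
      linarith [hb2, hβm]
    have e3 : (r - 1) * (m ^ (r - 2) * α - m ^ (r - 1)) = (r - 1) * m ^ (r - 2) * ((α - β) / 2) := by
      rw [← hshm, hm]; ring
    have hdm : m ^ (r - 2) = (α + β) ^ (r - 2) / 2 ^ (r - 2) := by
      rw [hm]; exact Real.div_rpow (by linarith) (by norm_num) _
    have h22 : (2:ℝ) ^ (r - 2) * 2 = (2:ℝ) ^ (r - 1) := rpow_shift r hr (by norm_num)
    have h2pos' : (0:ℝ) < (2:ℝ) ^ (r - 2) := Real.rpow_pos_of_pos (by norm_num) _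
    have hfin : ((r - 1) / 2 ^ (r - 1)) * ((α + β) ^ (r - 2) * (α - β))
        = (r - 1) * m ^ (r - 2) * ((α - β) / 2) := by
      rw [hdm, ← h22]
      field_simp
    rw [hfin]
    linarith [hkey2, e3]

private lemma keylem (r : ℝ) (hr : 1 < r) :
    ∃ c : ℝ, 0 < c ∧ ∀ α β t : ℝ, 0 ≤ β → β ≤ α → |t| ≤ α * β →
      α ^ (r - 2) * α ^ 2 + β ^ (r - 2) * β ^ 2 - (α ^ (r - 2) + β ^ (r - 2)) * t ≥
        c * (α + β) ^ (r - 2) * (α ^ 2 + β ^ 2 - 2 * t) := by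
  have h2pos : (0:ℝ) < (2:ℝ) ^ (r - 1) := Real.rpow_pos_of_pos (by norm_num) _
  have h1pos : (0:ℝ) < (2:ℝ) ^ (1 - r) := Real.rpow_pos_of_pos (by norm_num) _
  refine ⟨min ((2:ℝ) ^ (1 - r)) ((r - 1) / 2 ^ (r - 1)),
    lt_min h1pos (div_pos (by linarith) h2pos), ?_⟩
  set c : ℝ := min ((2:ℝ) ^ (1 - r)) ((r - 1) / 2 ^ (r - 1)) with hc
  have hcpos : 0 < c := lt_min h1pos (div_pos (by linarith) h2pos)
  have hcA : c ≤ (2:ℝ) ^ (1 - r) := min_le_left _ _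
  have hcB : c ≤ (r - 1) / 2 ^ (r - 1) := min_le_right _ _
  intro α β t hβ hβα ht
  have hα : 0 ≤ α := hβ.trans hβα
  have hs_α := rpow_shift r hr hα
  have hs_β := rpow_shift r hr hβ
  have hs_s := rpow_shift r hr (by linarith : (0:ℝ) ≤ α + β)
  have hPn2 : (0:ℝ) ≤ (α + β) ^ (r - 2) := Real.rpow_nonneg (by linarith) _
  have hPn1 : (0:ℝ) ≤ (α + β) ^ (r - 1) := Real.rpow_nonneg (by linarith) _
  -- endpoint t = α*β
  have hg1 : α ^ (r - 2) * α ^ 2 + β ^ (r - 2) * β ^ 2 - (α ^ (r - 2) + β ^ (r - 2)) * (α * β)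
      - c * (α + β) ^ (r - 2) * (α ^ 2 + β ^ 2 - 2 * (α * β)) ≥ 0 := by
    have e : α ^ (r - 2) * α ^ 2 + β ^ (r - 2) * β ^ 2 - (α ^ (r - 2) + β ^ (r - 2)) * (α * β)
        = (α - β) * (α ^ (r - 1) - β ^ (r - 1)) := by
      linear_combination (α - β) * hs_α - (α - β) * hs_β
    have hB := lemB r hr hβ hβα
    have hm1 : (α - β) * (((r - 1) / 2 ^ (r - 1)) * ((α + β) ^ (r - 2) * (α - β)))
        ≤ (α - β) * (α ^ (r - 1) - β ^ (r - 1)) :=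
      mul_le_mul_of_nonneg_left hB (by linarith)
    have hP2 : (0:ℝ) ≤ (α + β) ^ (r - 2) * (α - β) ^ 2 :=
      mul_nonneg hPn2 (sq_nonneg _)
    have hm2 : c * ((α + β) ^ (r - 2) * (α - β) ^ 2)
        ≤ ((r - 1) / 2 ^ (r - 1)) * ((α + β) ^ (r - 2) * (α - β) ^ 2) :=
      mul_le_mul_of_nonneg_right hcB hP2
    nlinarith [e, hm1, hm2]
  -- endpoint t = -(α*β)
  have hg2 : α ^ (r - 2) * α ^ 2 + β ^ (r - 2) * β ^ 2 + (α ^ (r - 2) + β ^ (r - 2)) * (α * β)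
      - c * (α + β) ^ (r - 2) * (α ^ 2 + β ^ 2 + 2 * (α * β)) ≥ 0 := by
    have e : α ^ (r - 2) * α ^ 2 + β ^ (r - 2) * β ^ 2 + (α ^ (r - 2) + β ^ (r - 2)) * (α * β)
        = (α + β) * (α ^ (r - 1) + β ^ (r - 1)) := by
      linear_combination (α + β) * hs_α + (α + β) * hs_β
    have e3 : (α + β) ^ (r - 2) * (α ^ 2 + β ^ 2 + 2 * (α * β))
        = (α + β) ^ (r - 1) * (α + β) := by
      linear_combination (α + β) * hs_s
    have hA := lemA r hr hβ hβα
    have hm3 : (α + β) * ((2:ℝ) ^ (1 - r) * (α + β) ^ (r - 1))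
        ≤ (α + β) * (α ^ (r - 1) + β ^ (r - 1)) :=
      mul_le_mul_of_nonneg_left hA (by linarith)
    have hP3 : (0:ℝ) ≤ (α + β) ^ (r - 1) * (α + β) := mul_nonneg hPn1 (by linarith)
    have hm4 : c * ((α + β) ^ (r - 1) * (α + β))
        ≤ (2:ℝ) ^ (1 - r) * ((α + β) ^ (r - 1) * (α + β)) :=
      mul_le_mul_of_nonneg_right hcA hP3
    nlinarith [e, e3, hm3, hm4]
  rcases le_total (c * (α + β) ^ (r - 2) * 2) (α ^ (r - 2) + β ^ (r - 2)) with hK | hK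
  · have htu : t ≤ α * β := le_of_abs_le ht
    have hprod : 0 ≤ (α * β - t) * ((α ^ (r - 2) + β ^ (r - 2)) - c * (α + β) ^ (r - 2) * 2) :=
      mul_nonneg (by linarith) (by linarith)
    nlinarith [hg1, hprod]
  · have htl : -(α * β) ≤ t := neg_le_of_abs_le ht
    have hprod : 0 ≤ (t + α * β) * (c * (α + β) ^ (r - 2) * 2 - (α ^ (r - 2) + β ^ (r - 2))) :=
      mul_nonneg (by linarith) (by linarith)
    nlinarith [hg2, hprod]

/-- For every real number `r ∈ (1,∞)` there exists a constant `c_r > 0` such that for all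
vectors `a, b ∈ ℝ^N`,
`⟪‖a‖^(r-2) • a − ‖b‖^(r-2) • b, a − b⟫ ≥ c_r (‖a‖ + ‖b‖)^(r-2) ‖a − b‖² ≥ 0`. -/
theorem stmt_0 (N : ℕ) (hN : 1 ≤ N) (r : ℝ) (hr : 1 < r) :
    ∃ c : ℝ, 0 < c ∧ ∀ a b : EuclideanSpace ℝ (Fin N),
      (inner ℝ ((‖a‖ ^ (r - 2)) • a - (‖b‖ ^ (r - 2)) • b) (a - b) : ℝ) ≥
          c * (‖a‖ + ‖b‖) ^ (r - 2) * ‖a - b‖ ^ 2 ∧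
        c * (‖a‖ + ‖b‖) ^ (r - 2) * ‖a - b‖ ^ 2 ≥ 0 := by
  obtain ⟨c, hc, hkey⟩ := keylem r hr
  refine ⟨c, hc, fun a b => ⟨?_, ?_⟩⟩
  · have hinner : (inner ℝ ((‖a‖ ^ (r - 2)) • a - (‖b‖ ^ (r - 2)) • b) (a - b) : ℝ)
        = ‖a‖ ^ (r - 2) * ‖a‖ ^ 2 + ‖b‖ ^ (r - 2) * ‖b‖ ^ 2
          - (‖a‖ ^ (r - 2) + ‖b‖ ^ (r - 2)) * (inner ℝ a b : ℝ) := by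
      simp only [inner_sub_left, inner_sub_right, real_inner_smul_left,
        real_inner_self_eq_norm_sq, real_inner_comm b a]
      ring
    have hnorm : ‖a - b‖ ^ 2 = ‖a‖ ^ 2 + ‖b‖ ^ 2 - 2 * (inner ℝ a b : ℝ) := by
      rw [norm_sub_sq_real]; ring
    have hCS : |(inner ℝ a b : ℝ)| ≤ ‖a‖ * ‖b‖ := abs_real_inner_le_norm a b
    rcases le_total ‖b‖ ‖a‖ with h | h
    · have := hkey ‖a‖ ‖b‖ (inner ℝ a b) (norm_nonneg b) h hCS
      rw [hinner, hnorm]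
      linarith
    · have := hkey ‖b‖ ‖a‖ (inner ℝ a b) (norm_nonneg a) h (by rw [mul_comm]; exact hCS)
      rw [hinner, hnorm]
      rw [add_comm ‖b‖ ‖a‖] at this
      linarith
  · have h1 : (0:ℝ) ≤ (‖a‖ + ‖b‖) ^ (r - 2) :=
      Real.rpow_nonneg (by positivity) _
    have h2 : (0:ℝ) ≤ ‖a - b‖ ^ 2 := sq_nonneg _
    positivity
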